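/- Let T be a g-invariant triangulation of the regular (3n+3)-gon, where g is rotation by 2π/3, and suppose the central triangle is formed by d, g·d, g²·d with d spanning exactly 2π/3. Then the remaining diagonals of T decompose into three g-translates of a triangulation of an (n+2)-gon; in particular, the number of g-orbits of diagonals of T is 1 + (n-1) = n. -/

import Mathlib

/-- `c` lies strictly inside the counterclockwise arc from `a` to `b`
on the `m`-gon with vertices `ZMod m`. -/
def Between {m : ℕ} [NeZero m] (a c b : ZMod m) : Prop :=
  0 < (c - a).val ∧ (c - a).val < (b - a).val

/-- Two chords of the `m`-gon, recorded as ordered pairs of endpoints,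
cross in their interior. -/
def Crosses {m : ℕ} [NeZero m] (p q : ZMod m × ZMod m) : Prop :=
  (Between p.1 q.1 p.2 ∧ Between p.2 q.2 p.1) ∨
  (Between p.1 q.2 p.2 ∧ Between p.2 q.1 p.1)

/-- A chord is a diagonal when its endpoints are distinct and non-adjacent. -/
def IsDiagonal {m : ℕ} (p : ZMod m × ZMod m) : Prop :=
  p.1 ≠ p.2 ∧ p.2 ≠ p.1 + 1 ∧ p.1 ≠ p.2 + 1

/-- A triangulation of the convex `m`-gon: a maximal collection of pairwise
non-crossing diagonals (recorded symmetrically as ordered pairs). -/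
structure IsTriangulation (m : ℕ) [NeZero m] (D : Set (ZMod m × ZMod m)) : Prop where
  symm : ∀ p ∈ D, (p.2, p.1) ∈ D
  diag : ∀ p ∈ D, IsDiagonal p
  noncross : ∀ p ∈ D, ∀ q ∈ D, ¬ Crosses p q
  maximal : ∀ p, IsDiagonal p → (∀ q ∈ D, ¬ Crosses p q) → p ∈ D

/-- Invariance of a set of diagonals under the rotation by `k` vertices. -/
def RotInvariant (m k : ℕ) (D : Set (ZMod m × ZMod m)) : Prop :=
  ∀ p : ZMod m × ZMod m, p ∈ D ↔ (p.1 + (k : ZMod m), p.2 + (k : ZMod m)) ∈ D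

/-- Rotation of a chord by `k` vertices. -/
def rotChord (m k : ℕ) (p : ZMod m × ZMod m) : ZMod m × ZMod m :=
  (p.1 + (k : ZMod m), p.2 + (k : ZMod m))

/-- Two chords lie in the same `g`-orbit (up to reversal of orientation). -/
def OrbEquiv (m k : ℕ) (p q : ZMod m × ZMod m) : Prop :=
  ∃ j : ℕ, q = (rotChord m k)^[j] p ∨ q = (rotChord m k)^[j] (p.2, p.1)

set_option linter.unusedSectionVars false


def NCross (p q : ℕ × ℕ) : Prop :=
  (p.1 < q.1 ∧ q.1 < p.2 ∧ p.2 < q.2) ∨ (q.1 < p.1 ∧ p.1 < q.2 ∧ q.2 < p.2)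

def NDiag (S : Finset ℕ) (p : ℕ × ℕ) : Prop :=
  p.1 ∈ S ∧ p.2 ∈ S ∧ p.1 < p.2 ∧ (∃ c ∈ S, p.1 < c ∧ c < p.2) ∧
    (∃ c ∈ S, c < p.1 ∨ p.2 < c)

theorem ncount : ∀ N (S : Finset ℕ) (F : Finset (ℕ × ℕ)),
    S.card ≤ N → 3 ≤ S.card →
    (∀ p ∈ F, NDiag S p) →
    (∀ p ∈ F, ∀ q ∈ F, ¬ NCross p q) →
    (∀ p, NDiag S p → (∀ q ∈ F, ¬ NCross p q) → p ∈ F) →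
    F.card = S.card - 3 := by
  intro N
  induction N with
  | zero => intro S F h h3 _ _ _; omega
  | succ N ih =>
    intro S F hSN h3 hdiag hnc hmax
    rcases F.eq_empty_or_nonempty with hF | ⟨⟨x, y⟩, hp⟩
    · -- F empty : show S.card = 3
      subst hF
      by_contra hne
      have h4 : 4 ≤ S.card := by
        rcases Nat.lt_or_ge S.card 4 with h | h
        · exfalso; apply hne; simp at *; omega
        · exact h
      -- sorted four smallest
      have hS0 : S.Nonempty := Finset.card_pos.mp (by omega)
      set s0 := S.min' hS0 with hs0
      have hs0S : s0 ∈ S := S.min'_mem hS0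
      set T := S.erase s0 with hT
      have hTcard : T.card = S.card - 1 := Finset.card_erase_of_mem hs0S
      have hT0 : T.Nonempty := Finset.card_pos.mp (by omega)
      set s1 := T.min' hT0 with hs1
      have hs1T : s1 ∈ T := T.min'_mem hT0
      set U := T.erase s1 with hU
      have hUcard : U.card = T.card - 1 := Finset.card_erase_of_mem hs1T
      have hU0 : U.Nonempty := Finset.card_pos.mp (by omega)
      set s2 := U.min' hU0 with hs2
      have hs2U : s2 ∈ U := U.min'_mem hU0
      set V := U.erase s2 with hV
      have hVcard : V.card = U.card - 1 := Finset.card_erase_of_mem hs2U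
      have hV0 : V.Nonempty := Finset.card_pos.mp (by omega)
      obtain ⟨s3, hs3V⟩ := hV0
      have hs3U : s3 ∈ U := Finset.mem_of_mem_erase hs3V
      have hs2T : s2 ∈ T := Finset.mem_of_mem_erase hs2U
      have hs1S : s1 ∈ S := Finset.mem_of_mem_erase hs1T
      have hs2S : s2 ∈ S := Finset.mem_of_mem_erase hs2T
      have hs3S : s3 ∈ S := Finset.mem_of_mem_erase (Finset.mem_of_mem_erase hs3U)
      have h01 : s0 < s1 := lt_of_le_of_ne (S.min'_le _ hs1S) (Finset.ne_of_mem_erase hs1T).symm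
      have h12 : s1 < s2 := lt_of_le_of_ne (T.min'_le _ hs2T) (Finset.ne_of_mem_erase hs2U).symm
      have h23 : s2 < s3 := lt_of_le_of_ne (U.min'_le _ hs3U) (Finset.ne_of_mem_erase hs3V).symm
      have : ((s0, s2) : ℕ × ℕ) ∈ (∅ : Finset (ℕ × ℕ)) := by
        apply hmax
        · exact ⟨hs0S, hs2S, by omega, ⟨s1, hs1S, by omega⟩, ⟨s3, hs3S, by omega⟩⟩
        · intro q hq; simp at hq
      simp at this
    · -- F nonempty
      have hpd := hdiag _ hp
      obtain ⟨hxS, hyS, hxy, ⟨c0, hc0S, hc0⟩, ⟨c1, hc1S, hc1⟩⟩ := hpd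
      simp only at hxS hyS hxy hc0 hc1
      classical
      set S₁ := S.filter (fun v => x ≤ v ∧ v ≤ y) with hS₁
      set S₂ := S.filter (fun v => v ≤ x ∨ y ≤ v) with hS₂
      set G := F.erase (x, y) with hG
      set F₁ := G.filter (fun q => x ≤ q.1 ∧ q.2 ≤ y) with hF₁
      set F₂ := G.filter (fun q => ¬(x ≤ q.1 ∧ q.2 ≤ y)) with hF₂
      have memS₁ : ∀ v, v ∈ S₁ ↔ v ∈ S ∧ x ≤ v ∧ v ≤ y := by
        intro v; simp [hS₁]
      have memS₂ : ∀ v, v ∈ S₂ ↔ v ∈ S ∧ (v ≤ x ∨ y ≤ v) := by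
        intro v; simp [hS₂]
      have ltq : ∀ q ∈ F, q.1 < q.2 := fun q hq => (hdiag q hq).2.2.1
      have hclass : ∀ q ∈ F, q ≠ (x, y) →
          (x ≤ q.1 ∧ q.2 ≤ y) ∨ ((q.1 ≤ x ∨ y ≤ q.1) ∧ (q.2 ≤ x ∨ y ≤ q.2)) := by
        intro q hq hne
        have h1 := hnc _ hp _ hq
        have h2 := ltq q hq
        unfold NCross at h1
        simp only at h1
        omega
      have memF₁ : ∀ q, q ∈ F₁ ↔ q ∈ F ∧ q ≠ (x, y) ∧ x ≤ q.1 ∧ q.2 ≤ y := by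
        intro q; simp [hF₁, hG, Finset.mem_erase]; tauto
      have memF₂ : ∀ q, q ∈ F₂ ↔ q ∈ F ∧ q ≠ (x, y) ∧ ¬(x ≤ q.1 ∧ q.2 ≤ y) := by
        intro q; simp [hF₂, hG, Finset.mem_erase]; tauto
      have sideF₂ : ∀ q ∈ F₂, (q.1 ≤ x ∨ y ≤ q.1) ∧ (q.2 ≤ x ∨ y ≤ q.2) := by
        intro q hq
        rw [memF₂] at hq
        rcases hclass q hq.1 hq.2.1 with h | h
        · exact absurd h hq.2.2
        · exact h
      -- region 1
      have h1card3 : 3 ≤ S₁.card := by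
        have hsub : ({x, c0, y} : Finset ℕ) ⊆ S₁ := by
          intro v hv
          simp at hv
          rw [memS₁]
          rcases hv with rfl | rfl | rfl
          · exact ⟨hxS, by omega⟩
          · exact ⟨hc0S, by omega⟩
          · exact ⟨hyS, by omega⟩
        have := Finset.card_le_card hsub
        have e1 : x ∉ ({c0, y} : Finset ℕ) := by
          simp only [Finset.mem_insert, Finset.mem_singleton]; omega
        have e2 : c0 ∉ ({y} : Finset ℕ) := by
          simp only [Finset.mem_singleton]; omega
        have hc : ({x, c0, y} : Finset ℕ).card = 3 := by
          rw [Finset.card_insert_of_notMem e1,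
            Finset.card_insert_of_notMem e2, Finset.card_singleton]
        omega
      have h1cardlt : S₁.card < S.card := by
        apply Finset.card_lt_card
        constructor
        · exact Finset.filter_subset _ _
        · intro hsub
          have := hsub hc1S
          rw [memS₁] at this
          omega
      have h1diag : ∀ q ∈ F₁, NDiag S₁ q := by
        intro q hq
        rw [memF₁] at hq
        obtain ⟨hqF, hqne, hq1, hq2⟩ := hq
        obtain ⟨ha1, ha2, ha3, ⟨c, hcS, hc⟩, _⟩ := hdiag q hqF
        refine ⟨(memS₁ _).mpr ⟨ha1, by omega⟩, (memS₁ _).mpr ⟨ha2, by omega⟩, ha3,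
          ⟨c, (memS₁ _).mpr ⟨hcS, by omega⟩, hc⟩, ?_⟩
        by_cases hx1 : x < q.1
        · exact ⟨x, (memS₁ _).mpr ⟨hxS, by omega⟩, by omega⟩
        · have : q.1 = x := by omega
          have h2y : q.2 ≠ y := by
            intro h; apply hqne; rw [Prod.ext_iff]; exact ⟨this, h⟩
          exact ⟨y, (memS₁ _).mpr ⟨hyS, by omega⟩, by omega⟩
      have h1max : ∀ r, NDiag S₁ r → (∀ q ∈ F₁, ¬ NCross r q) → r ∈ F₁ := by
        intro r hr hrnc
        obtain ⟨hr1, hr2, hr12, ⟨c, hcS, hc⟩, ⟨c', hc'S, hc'⟩⟩ := hr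
        rw [memS₁] at hr1 hr2 hc'S
        have hrne : x < r.1 ∨ r.2 < y := by omega
        have hrF : r ∈ F := by
          apply hmax
          · exact ⟨hr1.1, hr2.1, hr12, ⟨c, (memS₁ c).mp hcS |>.1,
              hc⟩, ⟨c', hc'S.1, hc'⟩⟩
          · intro q hqF
            by_cases hqp : q = (x, y)
            · subst hqp; unfold NCross; simp only; omega
            · by_cases hq1 : x ≤ q.1 ∧ q.2 ≤ y
              · exact hrnc q ((memF₁ q).mpr ⟨hqF, hqp, hq1.1, hq1.2⟩)
              · have hside := sideF₂ q ((memF₂ q).mpr ⟨hqF, hqp, hq1⟩)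
                have := ltq q hqF
                unfold NCross; omega
        rw [memF₁]
        refine ⟨hrF, ?_, by omega, by omega⟩
        intro h; rw [Prod.ext_iff] at h; omega
      have h1c := ih S₁ F₁ (by omega) h1card3 h1diag
        (fun q hq r hr => hnc q ((memF₁ q).mp hq).1 r ((memF₁ r).mp hr).1) h1max
      -- region 2
      have h2card3 : 3 ≤ S₂.card := by
        have hsub : ({x, y, c1} : Finset ℕ) ⊆ S₂ := by
          intro v hv
          simp at hv
          rw [memS₂]
          rcases hv with rfl | rfl | rfl
          · exact ⟨hxS, by omega⟩
          · exact ⟨hyS, by omega⟩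
          · exact ⟨hc1S, by omega⟩
        have := Finset.card_le_card hsub
        have e1 : x ∉ ({y, c1} : Finset ℕ) := by
          simp only [Finset.mem_insert, Finset.mem_singleton]; omega
        have e2 : y ∉ ({c1} : Finset ℕ) := by
          simp only [Finset.mem_singleton]; omega
        have hc : ({x, y, c1} : Finset ℕ).card = 3 := by
          rw [Finset.card_insert_of_notMem e1,
            Finset.card_insert_of_notMem e2, Finset.card_singleton]
        omega
      have h2cardlt : S₂.card < S.card := by
        apply Finset.card_lt_card
        constructor
        · exact Finset.filter_subset _ _
        · intro hsub
          have := hsub hc0S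
          rw [memS₂] at this
          omega
      have h2diag : ∀ q ∈ F₂, NDiag S₂ q := by
        intro q hq
        have hside := sideF₂ q hq
        rw [memF₂] at hq
        obtain ⟨hqF, hqne, hqn1⟩ := hq
        obtain ⟨ha1, ha2, ha3, ⟨c, hcS, hc⟩, ⟨c', hc'S, hc'⟩⟩ := hdiag q hqF
        have hqxy : ¬(q.1 = x ∧ q.2 = y) := by
          intro h; apply hqne; rw [Prod.ext_iff]; exact ⟨h.1, h.2⟩
        refine ⟨(memS₂ _).mpr ⟨ha1, hside.1⟩, (memS₂ _).mpr ⟨ha2, hside.2⟩, ha3, ?_, ?_⟩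
        · -- inside witness in S₂
          rcases hside.1 with h1 | h1 <;> rcases hside.2 with h2 | h2
          · exact ⟨c, (memS₂ _).mpr ⟨hcS, by omega⟩, hc⟩
          · by_cases hx1 : q.1 < x
            · exact ⟨x, (memS₂ _).mpr ⟨hxS, by omega⟩, by omega⟩
            · exact ⟨y, (memS₂ _).mpr ⟨hyS, by omega⟩, by omega⟩
          · omega
          · exact ⟨c, (memS₂ _).mpr ⟨hcS, by omega⟩, hc⟩
        · -- outside witness in S₂
          rcases hside.1 with h1 | h1 <;> rcases hside.2 with h2 | h2
          · exact ⟨y, (memS₂ _).mpr ⟨hyS, by omega⟩, by omega⟩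
          · exact ⟨c', (memS₂ _).mpr ⟨hc'S, by omega⟩, hc'⟩
          · omega
          · exact ⟨x, (memS₂ _).mpr ⟨hxS, by omega⟩, by omega⟩
      have h2max : ∀ r, NDiag S₂ r → (∀ q ∈ F₂, ¬ NCross r q) → r ∈ F₂ := by
        intro r hr hrnc
        obtain ⟨hr1, hr2, hr12, ⟨c, hcS, hc⟩, ⟨c', hc'S, hc'⟩⟩ := hr
        rw [memS₂] at hr1 hr2 hcS hc'S
        have hrne : r ≠ (x, y) := by
          intro h; rw [Prod.ext_iff] at h; obtain ⟨h1, h2⟩ := h; simp only at h1 h2; omega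
        have hrF : r ∈ F := by
          apply hmax
          · exact ⟨hr1.1, hr2.1, hr12, ⟨c, hcS.1, hc⟩, ⟨c', hc'S.1, hc'⟩⟩
          · intro q hqF
            by_cases hqp : q = (x, y)
            · subst hqp; unfold NCross; simp only; omega
            · by_cases hq1 : x ≤ q.1 ∧ q.2 ≤ y
              · have hqF₁ : q ∈ F₁ := (memF₁ q).mpr ⟨hqF, hqp, hq1.1, hq1.2⟩
                have hqnexy : x < q.1 ∨ q.2 < y := by
                  rcases Nat.lt_or_ge x q.1 with h | h
                  · exact Or.inl h
                  · right
                    have : q.1 = x := by omega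
                    rcases Nat.lt_or_ge q.2 y with h' | h'
                    · exact h'
                    · exfalso; apply hqp; rw [Prod.ext_iff]; constructor <;> omega
                unfold NCross; omega
              · exact hrnc q ((memF₂ q).mpr ⟨hqF, hqp, hq1⟩)
        rw [memF₂]
        refine ⟨hrF, hrne, ?_⟩
        intro h
        have : ¬(r.1 = x ∧ r.2 = y) := by
          intro h'; apply hrne; rw [Prod.ext_iff]; exact h'
        omega
      have h2c := ih S₂ F₂ (by omega) h2card3 h2diag
        (fun q hq r hr => hnc q ((memF₂ q).mp hq).1 r ((memF₂ r).mp hr).1) h2max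
      -- cardinalities
      have hScard : S₁.card + S₂.card = S.card + 2 := by
        have hu : S₁ ∪ S₂ = S := by
          apply Finset.Subset.antisymm
          · intro v hv
            rcases Finset.mem_union.mp hv with h | h
            · exact Finset.filter_subset _ _ h
            · exact Finset.filter_subset _ _ h
          · intro v hv
            rw [Finset.mem_union, memS₁, memS₂]
            rcases Nat.le_total x v with h1 | h1
            · rcases Nat.le_total v y with h2 | h2
              · exact Or.inl ⟨hv, h1, h2⟩
              · exact Or.inr ⟨hv, Or.inr h2⟩
            · exact Or.inr ⟨hv, Or.inl h1⟩
        have hi : S₁ ∩ S₂ = {x, y} := by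
          apply Finset.Subset.antisymm
          · intro v hv
            rw [Finset.mem_inter, memS₁, memS₂] at hv
            obtain ⟨⟨_, h1, h2⟩, _, h3⟩ := hv
            simp only [Finset.mem_insert, Finset.mem_singleton]
            omega
          · intro v hv
            simp at hv
            rw [Finset.mem_inter, memS₁, memS₂]
            rcases hv with rfl | rfl
            · exact ⟨⟨hxS, by omega⟩, hxS, by omega⟩
            · exact ⟨⟨hyS, by omega⟩, hyS, by omega⟩
        have := Finset.card_union_add_card_inter S₁ S₂
        rw [hu, hi] at this
        have hxy2 : ({x, y} : Finset ℕ).card = 2 := by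
          rw [Finset.card_insert_of_notMem (by simp; omega), Finset.card_singleton]
        omega
      have hFcard : F.card = F₁.card + F₂.card + 1 := by
        have hGc : G.card = F.card - 1 := Finset.card_erase_of_mem hp
        have h1 : F.card ≠ 0 := by
          intro h; rw [Finset.card_eq_zero] at h; subst h; simp at hp
        have := Finset.card_filter_add_card_filter_not (s := G)
          (p := fun q => x ≤ q.1 ∧ q.2 ≤ y)
        rw [← hF₁] at this
        rw [show (G.filter fun q => ¬(x ≤ q.1 ∧ q.2 ≤ y)) = F₂ from rfl] at this
        omega
      omega


def NBtw (x c y : ℕ) : Prop := (x < c ∧ c < y) ∨ (y < x ∧ x < c) ∨ (y < x ∧ c < y)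

def BCross (x y u v : ℕ) : Prop := (NBtw x u y ∧ NBtw y v x) ∨ (NBtw x v y ∧ NBtw y u x)

section Geo

variable {m : ℕ} [NeZero m] (a : ZMod m)

lemma val_sub_nat {x c : ℕ} (hx : x < m) (hc : c < m) :
    ((c : ZMod m) - (x : ZMod m)).val = if x ≤ c then c - x else c + m - x := by
  split_ifs with h
  · rw [← Nat.cast_sub h, ZMod.val_natCast, Nat.mod_eq_of_lt (by omega)]
  · have : (c : ZMod m) - (x : ZMod m) = ((c + m - x : ℕ) : ZMod m) := by
      have : ((m : ℕ) : ZMod m) = 0 := ZMod.natCast_self m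
      push_cast [Nat.cast_sub (by omega : x ≤ c + m)]
      rw [this]; ring
    rw [this, ZMod.val_natCast, Nat.mod_eq_of_lt (by omega)]

lemma repr_eq (z : ZMod m) : z = a + (((z - a).val : ℕ) : ZMod m) := by
  rw [ZMod.natCast_val, ZMod.cast_id]
  ring

lemma val_shift {c : ℕ} (hc : c < m) : ((a + (c : ZMod m)) - a).val = c := by
  rw [show a + (c : ZMod m) - a = (c : ZMod m) by ring, ZMod.val_natCast,
    Nat.mod_eq_of_lt hc]

lemma between_nat {x c y : ℕ} (hx : x < m) (hc : c < m) (hy : y < m) :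
    Between (a + (x : ZMod m)) (a + (c : ZMod m)) (a + (y : ZMod m)) ↔ NBtw x c y := by
  unfold Between NBtw
  have e1 : a + (c : ZMod m) - (a + (x : ZMod m)) = (c : ZMod m) - (x : ZMod m) := by ring
  have e2 : a + (y : ZMod m) - (a + (x : ZMod m)) = (y : ZMod m) - (x : ZMod m) := by ring
  rw [e1, e2, val_sub_nat hx hc, val_sub_nat hx hy]
  split_ifs <;> omega

lemma crosses_nat {x y u v : ℕ} (hx : x < m) (hy : y < m) (hu : u < m) (hv : v < m) :
    Crosses (a + (x : ZMod m), a + (y : ZMod m)) (a + (u : ZMod m), a + (v : ZMod m)) ↔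
      BCross x y u v := by
  unfold Crosses BCross
  simp only
  rw [between_nat a hx hu hy, between_nat a hy hv hx, between_nat a hx hv hy,
    between_nat a hy hu hx]

end Geo


section Orb

variable {m k : ℕ}

lemma rot_iter (j : ℕ) (p : ZMod m × ZMod m) :
    (rotChord m k)^[j] p = (p.1 + ((j * k : ℕ) : ZMod m), p.2 + ((j * k : ℕ) : ZMod m)) := by
  induction j generalizing p with
  | zero => simp
  | succ j ih =>
    rw [Function.iterate_succ_apply, ih]
    unfold rotChord
    simp only [Prod.mk.injEq]
    constructor <;> · push_cast; ring

lemma orb_iff (p q : ZMod m × ZMod m) :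
    OrbEquiv m k p q ↔ ∃ j : ℕ,
      q = (p.1 + ((j * k : ℕ) : ZMod m), p.2 + ((j * k : ℕ) : ZMod m)) ∨
      q = (p.2 + ((j * k : ℕ) : ZMod m), p.1 + ((j * k : ℕ) : ZMod m)) := by
  unfold OrbEquiv
  constructor <;> (rintro ⟨j, h | h⟩ <;> refine ⟨j, ?_⟩) <;>
    simp only [rot_iter] at * <;> tauto

lemma orb_refl (p : ZMod m × ZMod m) : OrbEquiv m k p p := ⟨0, Or.inl rfl⟩

lemma orb_swap (p : ZMod m × ZMod m) : OrbEquiv m k p (p.2, p.1) := ⟨0, Or.inr rfl⟩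

variable (hmk : 3 * k = m)
include hmk

lemma cast_mul3 (j : ℕ) : ((3 * j * k : ℕ) : ZMod m) = 0 := by
  have : 3 * j * k = j * m := by rw [← hmk]; ring
  rw [this]
  push_cast [ZMod.natCast_self]
  ring

lemma add_cancel3 (z : ZMod m) (j : ℕ) :
    z + ((j * k : ℕ) : ZMod m) + ((2 * j * k : ℕ) : ZMod m) = z := by
  rw [add_assoc, ← Nat.cast_add, show j * k + 2 * j * k = 3 * j * k by ring,
    cast_mul3 hmk, add_zero]

lemma orb_norm (p q : ZMod m × ZMod m) (h : OrbEquiv m k p q) :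
    ∃ j ≤ 2,
      q = (p.1 + ((j * k : ℕ) : ZMod m), p.2 + ((j * k : ℕ) : ZMod m)) ∨
      q = (p.2 + ((j * k : ℕ) : ZMod m), p.1 + ((j * k : ℕ) : ZMod m)) := by
  rw [orb_iff] at h
  obtain ⟨j, h⟩ := h
  refine ⟨j % 3, by omega, ?_⟩
  have e : ((j * k : ℕ) : ZMod m) = (((j % 3) * k : ℕ) : ZMod m) := by
    have : j * k = (j % 3) * k + 3 * (j / 3) * k := by
      have := Nat.mod_add_div j 3; nlinarith
    rw [this]
    push_cast [cast_mul3 hmk]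
    ring
  rw [e] at h
  exact h

lemma orb_symm {p q : ZMod m × ZMod m} (h : OrbEquiv m k p q) : OrbEquiv m k q p := by
  rw [orb_iff] at h ⊢
  obtain ⟨j, h | h⟩ := h <;> refine ⟨2 * j, ?_⟩
  · left
    subst h
    rw [Prod.ext_iff]
    exact ⟨(add_cancel3 hmk p.1 j).symm, (add_cancel3 hmk p.2 j).symm⟩
  · right
    subst h
    rw [Prod.ext_iff]
    exact ⟨(add_cancel3 hmk p.1 j).symm, (add_cancel3 hmk p.2 j).symm⟩

lemma orb_trans {p q r : ZMod m × ZMod m} (h1 : OrbEquiv m k p q)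
    (h2 : OrbEquiv m k q r) : OrbEquiv m k p r := by
  rw [orb_iff] at h1 h2 ⊢
  obtain ⟨j1, h1 | h1⟩ := h1 <;> obtain ⟨j2, h2 | h2⟩ := h2 <;> refine ⟨j1 + j2, ?_⟩ <;>
    subst h1 <;> subst h2 <;> simp only [Prod.mk.injEq] <;>
    [left; right; right; left] <;> constructor <;> · push_cast; ring

lemma orbit_eq_of_equiv {p q : ZMod m × ZMod m} (h : OrbEquiv m k p q) :
    {r | OrbEquiv m k p r} = {r | OrbEquiv m k q r} := by
  ext r
  exact ⟨fun hr => orb_trans hmk (orb_symm hmk h) hr, fun hr => orb_trans hmk h hr⟩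

lemma equiv_of_orbit_eq {p q : ZMod m × ZMod m}
    (h : {r | OrbEquiv m k p r} = {r | OrbEquiv m k q r}) : OrbEquiv m k p q := by
  have : q ∈ {r | OrbEquiv m k q r} := orb_refl q
  rw [← h] at this
  exact this

end Orb


set_option linter.unusedSectionVars false
set_option maxHeartbeats 1000000

section Extra

variable {m : ℕ} [NeZero m] (a : ZMod m)

lemma val_shift' (c : ℕ) : ((a + (c : ZMod m)) - a).val = c % m := by
  rw [show a + (c : ZMod m) - a = (c : ZMod m) by ring, ZMod.val_natCast]

lemma shift_inj {x y : ℕ} (hx : x < m) (hy : y < m)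
    (h : a + (x : ZMod m) = a + (y : ZMod m)) : x = y := by
  have h2 := congrArg (fun z => (z - a).val) h
  try simp only at h2
  rwa [val_shift a hx, val_shift a hy] at h2

lemma diag_of {x y : ℕ} (hx : x < m) (hy : y < m) (hx1 : x + 1 < m) (hy1 : y + 1 < m)
    (h1 : x ≠ y) (h2 : y ≠ x + 1) (h3 : x ≠ y + 1) :
    IsDiagonal (a + (x : ZMod m), a + (y : ZMod m)) := by
  refine ⟨?_, ?_, ?_⟩ <;> simp only
  · intro h; exact h1 (shift_inj a hx hy h)
  · intro h
    rw [show a + (x : ZMod m) + 1 = a + ((x + 1 : ℕ) : ZMod m) by push_cast; ring] at h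
    exact h2 (shift_inj a hy hx1 h)
  · intro h
    rw [show a + (y : ZMod m) + 1 = a + ((y + 1 : ℕ) : ZMod m) by push_cast; ring] at h
    exact h3 (shift_inj a hx hy1 h)

end Extra

lemma bcross_block (k x y u v : ℕ) (hk : 2 ≤ k) (hx : x ≤ k) (hy : y ≤ k)
    (hu : u < 3 * k) (hv : v < 3 * k)
    (h : (k ≤ u ∧ u ≤ 2 * k ∧ k ≤ v ∧ v ≤ 2 * k) ∨
         ((2 * k ≤ u ∨ u = 0) ∧ (2 * k ≤ v ∨ v = 0) ∧ ¬(u = 0 ∧ v = 0)) ∨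
         (u = 0 ∧ v = k) ∨ (u = k ∧ v = 0)) :
    ¬ BCross x y u v := by
  unfold BCross NBtw; omega

lemma bcross_ncross (x y u v : ℕ) (hxy : x < y) (huv : u < v) :
    BCross x y u v ↔ NCross (x, y) (u, v) := by
  simp only [BCross, NBtw, NCross]
  omega

lemma bcross_swap (x y u v : ℕ) : BCross x y u v ↔ BCross x y v u := by
  unfold BCross; tauto

section N

variable (n : ℕ) (hn : 1 ≤ n) (D : Set (ZMod (3 * n + 3) × ZMod (3 * n + 3)))
  (hD : IsTriangulation (3 * n + 3) D)
  (hg : RotInvariant (3 * n + 3) (n + 1) D)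
  (a : ZMod (3 * n + 3))
  (hd : (a, a + ((n + 1 : ℕ) : ZMod (3 * n + 3))) ∈ D)

include hn hD hg hd

lemma arc_sep (p : ZMod (3 * n + 3) × ZMod (3 * n + 3)) (hp : p ∈ D) :
    ((p.1 - a).val ≤ n + 1 ∧ (p.2 - a).val ≤ n + 1) ∨
    (n + 1 ≤ (p.1 - a).val ∧ (p.1 - a).val ≤ 2 * n + 2 ∧
      n + 1 ≤ (p.2 - a).val ∧ (p.2 - a).val ≤ 2 * n + 2) ∨
    ((2 * n + 2 ≤ (p.1 - a).val ∨ (p.1 - a).val = 0) ∧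
      (2 * n + 2 ≤ (p.2 - a).val ∨ (p.2 - a).val = 0)) := by
  have hx : (p.1 - a).val < 3 * n + 3 := ZMod.val_lt _
  have hy : (p.2 - a).val < 3 * n + 3 := ZMod.val_lt _
  have hpr : p = (a + (((p.1 - a).val : ℕ) : ZMod (3 * n + 3)),
      a + (((p.2 - a).val : ℕ) : ZMod (3 * n + 3))) :=
    Prod.ext_iff.mpr ⟨repr_eq a p.1, repr_eq a p.2⟩
  have e0 : a = a + ((0 : ℕ) : ZMod (3 * n + 3)) := by simp
  have e2 : a + ((n + 1 : ℕ) : ZMod (3 * n + 3)) + ((n + 1 : ℕ) : ZMod (3 * n + 3)) =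
      a + ((2 * n + 2 : ℕ) : ZMod (3 * n + 3)) := by push_cast; ring
  have e3 : a + ((n + 1 : ℕ) : ZMod (3 * n + 3)) + ((n + 1 : ℕ) : ZMod (3 * n + 3)) +
      ((n + 1 : ℕ) : ZMod (3 * n + 3)) = a + ((0 : ℕ) : ZMod (3 * n + 3)) := by
    have h3 : ((n + 1 : ℕ) : ZMod (3 * n + 3)) + ((n + 1 : ℕ) : ZMod (3 * n + 3)) +
        ((n + 1 : ℕ) : ZMod (3 * n + 3)) = ((3 * n + 3 : ℕ) : ZMod (3 * n + 3)) := by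
      push_cast; ring
    rw [ZMod.natCast_self] at h3
    rw [Nat.cast_zero, add_zero]
    linear_combination h3
  have hgd : (a + ((n + 1 : ℕ) : ZMod (3 * n + 3)),
      a + ((n + 1 : ℕ) : ZMod (3 * n + 3)) + ((n + 1 : ℕ) : ZMod (3 * n + 3))) ∈ D :=
    (hg (a, a + ((n + 1 : ℕ) : ZMod (3 * n + 3)))).mp hd
  have hg2d : (a + ((n + 1 : ℕ) : ZMod (3 * n + 3)) + ((n + 1 : ℕ) : ZMod (3 * n + 3)),
      a + ((n + 1 : ℕ) : ZMod (3 * n + 3)) + ((n + 1 : ℕ) : ZMod (3 * n + 3)) +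
        ((n + 1 : ℕ) : ZMod (3 * n + 3))) ∈ D := (hg _).mp hgd
  have h1 : ¬ Crosses (a + ((0 : ℕ) : ZMod (3 * n + 3)),
      a + ((n + 1 : ℕ) : ZMod (3 * n + 3)))
      (a + (((p.1 - a).val : ℕ) : ZMod (3 * n + 3)),
        a + (((p.2 - a).val : ℕ) : ZMod (3 * n + 3))) := by
    rw [← e0, ← hpr]; exact hD.noncross _ hd _ hp
  have h2 : ¬ Crosses (a + ((n + 1 : ℕ) : ZMod (3 * n + 3)),
      a + ((2 * n + 2 : ℕ) : ZMod (3 * n + 3)))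
      (a + (((p.1 - a).val : ℕ) : ZMod (3 * n + 3)),
        a + (((p.2 - a).val : ℕ) : ZMod (3 * n + 3))) := by
    rw [← e2, ← hpr]; exact hD.noncross _ hgd _ hp
  have h3 : ¬ Crosses (a + ((2 * n + 2 : ℕ) : ZMod (3 * n + 3)),
      a + ((0 : ℕ) : ZMod (3 * n + 3)))
      (a + (((p.1 - a).val : ℕ) : ZMod (3 * n + 3)),
        a + (((p.2 - a).val : ℕ) : ZMod (3 * n + 3))) := by
    rw [← e3, ← e2, ← hpr]; exact hD.noncross _ hg2d _ hp
  rw [crosses_nat a (by omega) (by omega) hx hy] at h1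
  rw [crosses_nat a (by omega) (by omega) hx hy] at h2
  rw [crosses_nat a (by omega) (by omega) hx hy] at h3
  unfold BCross NBtw at h1 h2 h3
  omega

lemma central_vals (q : ZMod (3 * n + 3) × ZMod (3 * n + 3))
    (h : OrbEquiv (3 * n + 3) (n + 1) (a, a + ((n + 1 : ℕ) : ZMod (3 * n + 3))) q) :
    ((q.1 - a).val = 0 ∧ (q.2 - a).val = n + 1) ∨
    ((q.1 - a).val = n + 1 ∧ (q.2 - a).val = 0) ∨
    ((q.1 - a).val = n + 1 ∧ (q.2 - a).val = 2 * n + 2) ∨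
    ((q.1 - a).val = 2 * n + 2 ∧ (q.2 - a).val = n + 1) ∨
    ((q.1 - a).val = 2 * n + 2 ∧ (q.2 - a).val = 0) ∨
    ((q.1 - a).val = 0 ∧ (q.2 - a).val = 2 * n + 2) := by
  have hmk : 3 * (n + 1) = 3 * n + 3 := by ring
  obtain ⟨j, hj, hcase⟩ := orb_norm hmk _ _ h
  have modred : ∀ c : ℕ, c ≤ 3 * n + 3 → c % (3 * n + 3) = if c = 3 * n + 3 then 0 else c := by
    intro c hc
    split_ifs with h'
    · rw [h', Nat.mod_self]
    · exact Nat.mod_eq_of_lt (by omega)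
  have hval : ∀ (c : ℕ) (z : ZMod (3 * n + 3)), z = a + (c : ZMod (3 * n + 3)) →
      (z - a).val = c % (3 * n + 3) := fun c z hz => by rw [hz, val_shift']
  have hval2 : ∀ (c : ℕ) (z : ZMod (3 * n + 3)),
      z = a + ((n + 1 : ℕ) : ZMod (3 * n + 3)) + (c : ZMod (3 * n + 3)) →
      (z - a).val = (n + 1 + c) % (3 * n + 3) := by
    intro c z hz
    rw [hz, show a + ((n + 1 : ℕ) : ZMod (3 * n + 3)) + (c : ZMod (3 * n + 3)) =
      a + ((n + 1 + c : ℕ) : ZMod (3 * n + 3)) by push_cast; ring, val_shift']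
  rcases hcase with hc | hc <;> rw [Prod.ext_iff] at hc <;> simp only at hc <;>
    obtain ⟨hc1, hc2⟩ := hc
  · have v1 := hval _ _ hc1
    have v2 := hval2 _ _ hc2
    interval_cases j <;>
      rw [v1, v2, modred _ (by omega), modred _ (by omega)] <;> split_ifs <;> omega
  · have v1 := hval2 _ _ hc1
    have v2 := hval _ _ hc2
    interval_cases j <;>
      rw [v1, v2, modred _ (by omega), modred _ (by omega)] <;> split_ifs <;> omega

omit hn hD hg hd in
lemma val_add_nat (z : ZMod (3 * n + 3)) (c : ℕ) :
    ((z + (c : ZMod (3 * n + 3))) - a).val = ((z - a).val + c) % (3 * n + 3) := by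
  have hz : z + (c : ZMod (3 * n + 3)) = a + ((((z - a).val + c : ℕ)) : ZMod (3 * n + 3)) := by
    push_cast [ZMod.natCast_val, ZMod.cast_id]
    ring
  rw [hz, val_shift']

end N

/-- the set `E` of diagonals supported on the arc from `a` to `a + (n+1)`,
excluding the central orbit. -/
def Eset (n : ℕ) (D : Set (ZMod (3 * n + 3) × ZMod (3 * n + 3)))
    (a : ZMod (3 * n + 3)) : Set (ZMod (3 * n + 3) × ZMod (3 * n + 3)) :=
  {p | p ∈ D ∧ (p.1 - a).val ≤ n + 1 ∧ (p.2 - a).val ≤ n + 1 ∧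
    ¬ OrbEquiv (3 * n + 3) (n + 1) (a, a + ((n + 1 : ℕ) : ZMod (3 * n + 3))) p}

section N2

variable (n : ℕ) (hn : 1 ≤ n) (D : Set (ZMod (3 * n + 3) × ZMod (3 * n + 3)))
  (hD : IsTriangulation (3 * n + 3) D)
  (hg : RotInvariant (3 * n + 3) (n + 1) D)
  (a : ZMod (3 * n + 3))
  (hd : (a, a + ((n + 1 : ℕ) : ZMod (3 * n + 3))) ∈ D)

include hn hD hg hd

lemma Eswap (p : ZMod (3 * n + 3) × ZMod (3 * n + 3)) (hp : p ∈ Eset n D a) :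
    (p.2, p.1) ∈ Eset n D a := by
  obtain ⟨h1, h2, h3, h4⟩ := hp
  refine ⟨hD.symm p h1, h3, h2, ?_⟩
  intro hc
  apply h4
  have hmk : 3 * (n + 1) = 3 * n + 3 := by ring
  have hsw : OrbEquiv (3 * n + 3) (n + 1) (p.2, p.1) p := by
    simpa using orb_swap (m := 3 * n + 3) (k := n + 1) (p.2, p.1)
  exact orb_trans hmk hc hsw

lemma Emax (x y : ℕ) (hxy : x < y) (hy : y ≤ n + 1) (hgap : x + 2 ≤ y)
    (hne : ¬(x = 0 ∧ y = n + 1))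
    (hnc : ∀ u v : ℕ, u < v → v ≤ n + 1 →
      (a + (u : ZMod (3 * n + 3)), a + (v : ZMod (3 * n + 3))) ∈ Eset n D a →
      ¬ NCross (x, y) (u, v)) :
    (a + (x : ZMod (3 * n + 3)), a + (y : ZMod (3 * n + 3))) ∈ Eset n D a := by
  have hmk : 3 * (n + 1) = 3 * n + 3 := by ring
  have hvx : ((a + (x : ZMod (3 * n + 3))) - a).val = x := val_shift a (by omega)
  have hvy : ((a + (y : ZMod (3 * n + 3))) - a).val = y := val_shift a (by omega)
  have hnotcen : ¬ OrbEquiv (3 * n + 3) (n + 1)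
      (a, a + ((n + 1 : ℕ) : ZMod (3 * n + 3)))
      (a + (x : ZMod (3 * n + 3)), a + (y : ZMod (3 * n + 3))) := by
    intro hcen
    have := central_vals n hn D hD hg a hd _ hcen
    simp only [hvx, hvy] at this
    omega
  have hrD : (a + (x : ZMod (3 * n + 3)), a + (y : ZMod (3 * n + 3))) ∈ D := by
    apply hD.maximal
    · exact diag_of a (by omega) (by omega) (by omega) (by omega)
        (by omega) (by omega) (by omega)
    · intro q hq
      have hub : (q.1 - a).val < 3 * n + 3 := ZMod.val_lt _
      have hvb : (q.2 - a).val < 3 * n + 3 := ZMod.val_lt _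
      have hqr : q = (a + (((q.1 - a).val : ℕ) : ZMod (3 * n + 3)),
          a + (((q.2 - a).val : ℕ) : ZMod (3 * n + 3))) :=
        Prod.ext_iff.mpr ⟨repr_eq a q.1, repr_eq a q.2⟩
      rw [show q = (a + (((q.1 - a).val : ℕ) : ZMod (3 * n + 3)),
          a + (((q.2 - a).val : ℕ) : ZMod (3 * n + 3))) from hqr,
        crosses_nat a (by omega) (by omega) hub hvb]
      have hne0 : ¬((q.1 - a).val = 0 ∧ (q.2 - a).val = 0) := by
        intro hc
        apply (hD.diag q hq).1
        rw [repr_eq a q.1, repr_eq a q.2, hc.1, hc.2]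
      rcases arc_sep n hn D hD hg a hd q hq with harc | harc | harc
      · by_cases hcen : OrbEquiv (3 * n + 3) (n + 1)
          (a, a + ((n + 1 : ℕ) : ZMod (3 * n + 3))) q
        · have hcv := central_vals n hn D hD hg a hd q hcen
          apply bcross_block (n + 1) _ _ _ _ (by omega) (by omega) (by omega)
            (by omega) (by omega)
          omega
        · have hqE : q ∈ Eset n D a := ⟨hq, harc.1, harc.2, hcen⟩
          have huv : (q.1 - a).val ≠ (q.2 - a).val := by
            intro h
            apply (hD.diag q hq).1
            rw [repr_eq a q.1, repr_eq a q.2, h]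
          rcases Nat.lt_or_ge (q.1 - a).val (q.2 - a).val with h' | h'
          · have := hnc _ _ h' harc.2 (by rw [← hqr]; exact hqE)
            rw [bcross_ncross x y _ _ hxy h']
            exact this
          · have h'' : (q.2 - a).val < (q.1 - a).val := by omega
            have hswE : (q.2, q.1) ∈ Eset n D a := Eswap n hn D hD hg a hd q hqE
            have hqr2 : (q.2, q.1) = (a + (((q.2 - a).val : ℕ) : ZMod (3 * n + 3)),
                a + (((q.1 - a).val : ℕ) : ZMod (3 * n + 3))) :=
              Prod.ext_iff.mpr ⟨repr_eq a q.2, repr_eq a q.1⟩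
            have := hnc _ _ h'' harc.1 (by rw [← hqr2]; exact hswE)
            rw [bcross_swap, bcross_ncross x y _ _ hxy h'']
            exact this
      · apply bcross_block (n + 1) _ _ _ _ (by omega) (by omega) (by omega)
          (by omega) (by omega)
        omega
      · apply bcross_block (n + 1) _ _ _ _ (by omega) (by omega) (by omega)
          (by omega) (by omega)
        omega
  exact ⟨hrD, by rw [hvx]; omega, by rw [hvy]; omega, hnotcen⟩

end N2

section N3

variable (n : ℕ) (hn : 1 ≤ n) (D : Set (ZMod (3 * n + 3) × ZMod (3 * n + 3)))
  (hD : IsTriangulation (3 * n + 3) D)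
  (hg : RotInvariant (3 * n + 3) (n + 1) D)
  (a : ZMod (3 * n + 3))
  (hd : (a, a + ((n + 1 : ℕ) : ZMod (3 * n + 3))) ∈ D)

omit hn hD hg hd in
lemma rot3_id (r : ZMod (3 * n + 3) × ZMod (3 * n + 3)) :
    (rotChord (3 * n + 3) (n + 1))^[3] r = r := by
  have hc0 : ((3 * (n + 1) : ℕ) : ZMod (3 * n + 3)) = 0 := by
    rw [show 3 * (n + 1) = 3 * n + 3 by ring]
    exact ZMod.natCast_self _
  rw [rot_iter, hc0, add_zero, add_zero]

include hn hD hg hd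

lemma decomp (p : ZMod (3 * n + 3) × ZMod (3 * n + 3)) (hp : p ∈ D) :
    OrbEquiv (3 * n + 3) (n + 1) (a, a + ((n + 1 : ℕ) : ZMod (3 * n + 3))) p ∨
    ∃ u v : ℕ, u < v ∧ v ≤ n + 1 ∧
      (a + (u : ZMod (3 * n + 3)), a + (v : ZMod (3 * n + 3))) ∈ Eset n D a ∧
      OrbEquiv (3 * n + 3) (n + 1) (a + (u : ZMod (3 * n + 3)), a + (v : ZMod (3 * n + 3))) p := by
  have hmk : 3 * (n + 1) = 3 * n + 3 := by ring
  by_cases hcen : OrbEquiv (3 * n + 3) (n + 1)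
      (a, a + ((n + 1 : ℕ) : ZMod (3 * n + 3))) p
  · exact Or.inl hcen
  right
  have hiterD : ∀ (j : ℕ) (r : ZMod (3 * n + 3) × ZMod (3 * n + 3)), r ∈ D →
      (rotChord (3 * n + 3) (n + 1))^[j] r ∈ D := by
    intro j
    induction j with
    | zero => intro r hr; simpa using hr
    | succ j ih =>
      intro r hr
      rw [Function.iterate_succ_apply']
      exact (hg _).mp (ih r hr)
  -- main helper: if q is in D, supported on arc 0, not central, and equivalent to p, done
  have habs : ∀ q ∈ D, (q.1 - a).val ≤ n + 1 → (q.2 - a).val ≤ n + 1 →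
      ¬ OrbEquiv (3 * n + 3) (n + 1) (a, a + ((n + 1 : ℕ) : ZMod (3 * n + 3))) q →
      OrbEquiv (3 * n + 3) (n + 1) q p →
      ∃ u v : ℕ, u < v ∧ v ≤ n + 1 ∧
        (a + (u : ZMod (3 * n + 3)), a + (v : ZMod (3 * n + 3))) ∈ Eset n D a ∧
        OrbEquiv (3 * n + 3) (n + 1)
          (a + (u : ZMod (3 * n + 3)), a + (v : ZMod (3 * n + 3))) p := by
    intro q hq h1 h2 h3 h4
    have hqr : q = (a + (((q.1 - a).val : ℕ) : ZMod (3 * n + 3)),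
        a + (((q.2 - a).val : ℕ) : ZMod (3 * n + 3))) :=
      Prod.ext_iff.mpr ⟨repr_eq a q.1, repr_eq a q.2⟩
    have huv : (q.1 - a).val ≠ (q.2 - a).val := by
      intro h
      apply (hD.diag q hq).1
      rw [repr_eq a q.1, repr_eq a q.2, h]
    rcases Nat.lt_or_ge (q.1 - a).val (q.2 - a).val with h' | h'
    · exact ⟨_, _, h', h2, by rw [← hqr]; exact ⟨hq, h1, h2, h3⟩,
        by rw [← hqr]; exact h4⟩
    · have h'' : (q.2 - a).val < (q.1 - a).val := by omega
      have hswE : (q.2, q.1) ∈ Eset n D a :=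
        Eswap n hn D hD hg a hd q ⟨hq, h1, h2, h3⟩
      have hqr2 : (q.2, q.1) = (a + (((q.2 - a).val : ℕ) : ZMod (3 * n + 3)),
          a + (((q.1 - a).val : ℕ) : ZMod (3 * n + 3))) :=
        Prod.ext_iff.mpr ⟨repr_eq a q.2, repr_eq a q.1⟩
      have hswp : OrbEquiv (3 * n + 3) (n + 1) (q.2, q.1) p := by
        refine orb_trans hmk ?_ h4
        simpa using orb_swap (m := 3 * n + 3) (k := n + 1) (q.2, q.1)
      exact ⟨_, _, h'', h1, by rw [← hqr2]; exact hswE, by rw [← hqr2]; exact hswp⟩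
  have hx : (p.1 - a).val < 3 * n + 3 := ZMod.val_lt _
  have hy : (p.2 - a).val < 3 * n + 3 := ZMod.val_lt _
  have hmods : ∀ t : ℕ, 3 * n + 3 ≤ t → t < 2 * (3 * n + 3) →
      t % (3 * n + 3) = t - (3 * n + 3) := by
    intro t ht1 ht2
    rw [Nat.mod_eq_sub_mod ht1, Nat.mod_eq_of_lt (by omega)]
  have hmodlt : ∀ t : ℕ, t < 3 * n + 3 → t % (3 * n + 3) = t :=
    fun t ht => Nat.mod_eq_of_lt ht
  rcases arc_sep n hn D hD hg a hd p hp with harc | harc | harc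
  · exact habs p hp harc.1 harc.2 hcen (orb_refl p)
  · -- arc 1 : shift by 2
    set q := (rotChord (3 * n + 3) (n + 1))^[2] p with hqdef
    have hqD : q ∈ D := hiterD 2 p hp
    have hqform : q = (p.1 + ((2 * (n + 1) : ℕ) : ZMod (3 * n + 3)),
        p.2 + ((2 * (n + 1) : ℕ) : ZMod (3 * n + 3))) := rot_iter 2 p
    have hv1 : (q.1 - a).val = (p.1 - a).val - (n + 1) := by
      rw [hqform]
      simp only
      rw [val_add_nat, hmods _ (by omega) (by omega)]
      omega
    have hv2 : (q.2 - a).val = (p.2 - a).val - (n + 1) := by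
      rw [hqform]
      simp only
      rw [val_add_nat, hmods _ (by omega) (by omega)]
      omega
    have hqp : OrbEquiv (3 * n + 3) (n + 1) q p := by
      refine ⟨1, Or.inl ?_⟩
      rw [hqdef, ← Function.iterate_add_apply]
      exact (rot3_id n p).symm
    exact habs q hqD (by omega) (by omega)
      (fun hc => hcen (orb_trans hmk hc hqp)) hqp
  · -- arc 2 : shift by 1
    set q := (rotChord (3 * n + 3) (n + 1))^[1] p with hqdef
    have hqD : q ∈ D := hiterD 1 p hp
    have hqform : q = (p.1 + ((1 * (n + 1) : ℕ) : ZMod (3 * n + 3)),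
        p.2 + ((1 * (n + 1) : ℕ) : ZMod (3 * n + 3))) := rot_iter 1 p
    have hv1 : (q.1 - a).val ≤ n + 1 := by
      rw [hqform]
      simp only
      rw [val_add_nat]
      rcases harc.1 with h | h
      · rw [hmods _ (by omega) (by omega)]; omega
      · rw [h, hmodlt _ (by omega)]; omega
    have hv2 : (q.2 - a).val ≤ n + 1 := by
      rw [hqform]
      simp only
      rw [val_add_nat]
      rcases harc.2 with h | h
      · rw [hmods _ (by omega) (by omega)]; omega
      · rw [h, hmodlt _ (by omega)]; omega
    have hqp : OrbEquiv (3 * n + 3) (n + 1) q p := by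
      refine ⟨2, Or.inl ?_⟩
      rw [hqdef, ← Function.iterate_add_apply]
      exact (rot3_id n p).symm
    exact habs q hqD hv1 hv2 (fun hc => hcen (orb_trans hmk hc hqp)) hqp

omit hn hD hg hd in
lemma orbit_sep (u v u' v' : ℕ) (h1 : u < v) (h2 : v ≤ n + 1) (h3 : u' < v') (h4 : v' ≤ n + 1)
    (h : OrbEquiv (3 * n + 3) (n + 1) (a + (u : ZMod (3 * n + 3)), a + (v : ZMod (3 * n + 3)))
      (a + (u' : ZMod (3 * n + 3)), a + (v' : ZMod (3 * n + 3)))) : u = u' ∧ v = v' := by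
  have hmk : 3 * (n + 1) = 3 * n + 3 := by ring
  obtain ⟨j, hj, hcase⟩ := orb_norm hmk _ _ h
  have modred : ∀ c : ℕ, c ≤ 3 * n + 3 → c % (3 * n + 3) = if c = 3 * n + 3 then 0 else c := by
    intro c hc
    split_ifs with h'
    · rw [h', Nat.mod_self]
    · exact Nat.mod_eq_of_lt (by omega)
  have hcmp : ∀ w c : ℕ, w < 3 * n + 3 →
      a + (w : ZMod (3 * n + 3)) = a + (c : ZMod (3 * n + 3)) → w = c % (3 * n + 3) := by
    intro w c hw hwc
    have h2 := congrArg (fun z => (z - a).val) hwc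
    try simp only at h2
    rwa [val_shift a hw, val_shift'] at h2
  rcases hcase with hc | hc <;> rw [Prod.ext_iff] at hc <;> simp only at hc <;>
      obtain ⟨hc1, hc2⟩ := hc
  · have e1 : a + (u' : ZMod (3 * n + 3)) = a + ((u + j * (n + 1) : ℕ) : ZMod (3 * n + 3)) := by
      rw [hc1]; push_cast; ring
    have e2 : a + (v' : ZMod (3 * n + 3)) = a + ((v + j * (n + 1) : ℕ) : ZMod (3 * n + 3)) := by
      rw [hc2]; push_cast; ring
    have g1 := hcmp _ _ (by omega) e1
    have g2 := hcmp _ _ (by omega) e2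
    interval_cases j <;>
      rw [modred _ (by omega)] at g1 <;> rw [modred _ (by omega)] at g2 <;>
      split_ifs at g1 g2 <;> omega
  · have e1 : a + (u' : ZMod (3 * n + 3)) = a + ((v + j * (n + 1) : ℕ) : ZMod (3 * n + 3)) := by
      rw [hc1]; push_cast; ring
    have e2 : a + (v' : ZMod (3 * n + 3)) = a + ((u + j * (n + 1) : ℕ) : ZMod (3 * n + 3)) := by
      rw [hc2]; push_cast; ring
    have g1 := hcmp _ _ (by omega) e1
    have g2 := hcmp _ _ (by omega) e2
    interval_cases j <;>
      rw [modred _ (by omega)] at g1 <;> rw [modred _ (by omega)] at g2 <;>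
      split_ifs at g1 g2 <;> omega

end N3

theorem orbit_count (n : ℕ) (hn : 1 ≤ n)
    (D : Set (ZMod (3 * n + 3) × ZMod (3 * n + 3)))
    (hD : IsTriangulation (3 * n + 3) D)
    (hg : RotInvariant (3 * n + 3) (n + 1) D)
    (a : ZMod (3 * n + 3))
    (hd : (a, a + ((n + 1 : ℕ) : ZMod (3 * n + 3))) ∈ D) :
    (∃ E ⊆ D,
      (∀ p ∈ E, (p.1 - a).val ≤ n + 1 ∧ (p.2 - a).val ≤ n + 1 ∧
        ¬ OrbEquiv (3 * n + 3) (n + 1) (a, a + ((n + 1 : ℕ) : ZMod (3 * n + 3))) p) ∧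
      (∀ p ∈ D,
        OrbEquiv (3 * n + 3) (n + 1) (a, a + ((n + 1 : ℕ) : ZMod (3 * n + 3))) p ∨
        ∃ q ∈ E, OrbEquiv (3 * n + 3) (n + 1) q p)) ∧
    Set.ncard ((fun p => {q | OrbEquiv (3 * n + 3) (n + 1) p q}) '' D) = n := by
  classical
  have hmk : 3 * (n + 1) = 3 * n + 3 := by ring
  set F : Finset (ℕ × ℕ) := ((Finset.range (n + 2)) ×ˢ (Finset.range (n + 2))).filter
    (fun q => q.1 < q.2 ∧
      (a + (q.1 : ZMod (3 * n + 3)), a + (q.2 : ZMod (3 * n + 3))) ∈ Eset n D a) with hFdef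
  have memF : ∀ u v : ℕ, ((u, v) ∈ F) ↔ u < v ∧ v ≤ n + 1 ∧
      (a + (u : ZMod (3 * n + 3)), a + (v : ZMod (3 * n + 3))) ∈ Eset n D a := by
    intro u v
    rw [hFdef, Finset.mem_filter, Finset.mem_product, Finset.mem_range, Finset.mem_range]
    simp only
    constructor
    · rintro ⟨⟨h1, h2⟩, h3, h4⟩
      refine ⟨h3, ?_, h4⟩
      by_contra hcon
      have := h4.2.2.1
      rw [val_shift a (by omega)] at this
      omega
    · rintro ⟨h1, h2, h3⟩; exact ⟨⟨by omega, by omega⟩, h1, h3⟩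
  have hdiagF : ∀ u v : ℕ, u < v → v ≤ n + 1 →
      (a + (u : ZMod (3 * n + 3)), a + (v : ZMod (3 * n + 3))) ∈ Eset n D a →
      v ≠ u + 1 ∧ ¬(u = 0 ∧ v = n + 1) := by
    intro u v h1 h2 hE
    constructor
    · intro huv1
      apply (hD.diag _ hE.1).2.1
      simp only
      rw [huv1]; push_cast; ring
    · rintro ⟨rfl, rfl⟩
      apply hE.2.2.2
      have e : (a + ((0 : ℕ) : ZMod (3 * n + 3)),
          a + ((n + 1 : ℕ) : ZMod (3 * n + 3))) =
          (a, a + ((n + 1 : ℕ) : ZMod (3 * n + 3))) := by norm_num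
      rw [e]
      exact orb_refl _
  have hFd : ∀ p ∈ F, NDiag (Finset.range (n + 2)) p := by
    rintro ⟨u, v⟩ hp
    rw [memF] at hp
    obtain ⟨h1, h2, hE⟩ := hp
    obtain ⟨hadj, hncen⟩ := hdiagF u v h1 h2 hE
    refine ⟨Finset.mem_range.mpr (by omega), Finset.mem_range.mpr (by omega), h1,
      ⟨u + 1, Finset.mem_range.mpr (by omega), by omega, by omega⟩, ?_⟩
    by_cases hu0 : u = 0
    · exact ⟨n + 1, Finset.mem_range.mpr (by omega), by omega⟩
    · exact ⟨0, Finset.mem_range.mpr (by omega), by omega⟩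
  have hFnc : ∀ p ∈ F, ∀ q ∈ F, ¬ NCross p q := by
    rintro ⟨u, v⟩ hp ⟨u', v'⟩ hq
    rw [memF] at hp hq
    have hcr := hD.noncross _ hp.2.2.1 _ hq.2.2.1
    rw [crosses_nat a (by omega) (by omega) (by omega) (by omega)] at hcr
    rw [← bcross_ncross _ _ _ _ hp.1 hq.1]
    exact hcr
  have hFmax : ∀ p, NDiag (Finset.range (n + 2)) p → (∀ q ∈ F, ¬ NCross p q) → p ∈ F := by
    rintro ⟨x, y⟩ hnd hnc
    obtain ⟨hx, hy, hxy, ⟨c, hcS, hc1, hc2⟩, ⟨c', hc'S, hc'⟩⟩ := hnd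
    rw [Finset.mem_range] at hx hy hcS hc'S
    simp only at hxy hc1 hc2 hc'
    have hEmem := Emax n hn D hD hg a hd x y hxy (by omega) (by omega) (by omega)
      (fun u v huv hv hE => hnc (u, v) ((memF u v).mpr ⟨huv, hv, hE⟩))
    exact (memF x y).mpr ⟨hxy, by omega, hEmem⟩
  have hcount : F.card = n - 1 := by
    have h := ncount (n + 2) (Finset.range (n + 2)) F
      (by rw [Finset.card_range]) (by rw [Finset.card_range]; omega) hFd hFnc hFmax
    rw [Finset.card_range] at h
    omega
  refine ⟨⟨Eset n D a, fun p hp => hp.1, fun p hp => ⟨hp.2.1, hp.2.2.1, hp.2.2.2⟩, ?_⟩, ?_⟩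
  · intro p hp
    rcases decomp n hn D hD hg a hd p hp with h | ⟨u, v, h1, h2, hE, ho⟩
    · exact Or.inl h
    · exact Or.inr ⟨_, hE, ho⟩
  · -- counting the orbits
    have himg : ((fun p => {q | OrbEquiv (3 * n + 3) (n + 1) p q}) '' D) =
        insert {q | OrbEquiv (3 * n + 3) (n + 1)
            (a, a + ((n + 1 : ℕ) : ZMod (3 * n + 3))) q}
          ((fun xy : ℕ × ℕ => {q | OrbEquiv (3 * n + 3) (n + 1)
            (a + (xy.1 : ZMod (3 * n + 3)), a + (xy.2 : ZMod (3 * n + 3))) q}) ''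
              (F : Set (ℕ × ℕ))) := by
      ext t
      simp only [Set.mem_image, Set.mem_insert_iff, Finset.mem_coe]
      constructor
      · rintro ⟨p, hp, rfl⟩
        rcases decomp n hn D hD hg a hd p hp with h | ⟨u, v, h1, h2, hE, ho⟩
        · exact Or.inl (orbit_eq_of_equiv hmk h).symm
        · exact Or.inr ⟨(u, v), (memF u v).mpr ⟨h1, h2, hE⟩, orbit_eq_of_equiv hmk ho⟩
      · rintro (rfl | ⟨xy, hxy, rfl⟩)
        · exact ⟨_, hd, rfl⟩
        · obtain ⟨u, v⟩ := xy
          rw [memF] at hxy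
          exact ⟨_, hxy.2.2.1, rfl⟩
    rw [himg]
    have hnotmem : {q | OrbEquiv (3 * n + 3) (n + 1)
        (a, a + ((n + 1 : ℕ) : ZMod (3 * n + 3))) q} ∉
        ((fun xy : ℕ × ℕ => {q | OrbEquiv (3 * n + 3) (n + 1)
          (a + (xy.1 : ZMod (3 * n + 3)), a + (xy.2 : ZMod (3 * n + 3))) q}) ''
            (F : Set (ℕ × ℕ))) := by
      rintro ⟨⟨u, v⟩, huv, heq⟩
      rw [Finset.mem_coe, memF] at huv
      exact huv.2.2.2.2.2 (orb_symm hmk (equiv_of_orbit_eq hmk heq))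
    have hinj : Set.InjOn (fun xy : ℕ × ℕ => {q | OrbEquiv (3 * n + 3) (n + 1)
        (a + (xy.1 : ZMod (3 * n + 3)), a + (xy.2 : ZMod (3 * n + 3))) q})
        (F : Set (ℕ × ℕ)) := by
      rintro ⟨u, v⟩ hu ⟨u', v'⟩ hv heq
      rw [Finset.mem_coe, memF] at hu hv
      have he := equiv_of_orbit_eq hmk heq
      have hsep := orbit_sep n a u v u' v' hu.1 hu.2.1 hv.1 hv.2.1 he
      rw [Prod.ext_iff]
      exact ⟨hsep.1, hsep.2⟩
    rw [Set.ncard_insert_of_notMem hnotmem ((F.finite_toSet).image _),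
      Set.ncard_image_of_injOn hinj, Set.ncard_coe_finset, hcount]
    omega
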